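/- Let G be even-hole-free with cliques X_1,…,X_m as parts, a center part X_p containing a vertex y_p, and for every other part X_i a vertex w_{p,i} complete to X_p ∪ X_i with no other neighbors. Then the subgraph G' induced by the union of the parts X_i (i ≠ p), after removing all neighbors of y_p, is chordal. -/

import Mathlib

open SimpleGraph

variable {V : Type*}

/-- A set of vertices is independent if its vertices are pairwise non-adjacent. -/
def IsIndepSet (G : SimpleGraph V) (s : Set V) : Prop :=
  s.Pairwise fun a b => ¬ G.Adj a b

/-- `G` contains an induced cycle on `n` vertices. -/
def HasInducedCycle (G : SimpleGraph V) (n : ℕ) : Prop :=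
  ∃ f : Fin n ↪ V, ∀ i j, G.Adj (f i) (f j) ↔ (SimpleGraph.cycleGraph n).Adj i j

/-- `G` is even-hole-free: it has no induced cycle of even length at least 4. -/
def EvenHoleFree (G : SimpleGraph V) : Prop :=
  ∀ n, 4 ≤ n → Even n → ¬ HasInducedCycle G n

/-- `G` is C4-free: no induced cycle on 4 vertices. -/
def C4Free (G : SimpleGraph V) : Prop := ¬ HasInducedCycle G 4

/-- Let `G` be even-hole-free with cliques `X i` as parts, a center part `X p` containing
a vertex `yp`, and for every other part `X i` a vertex `w i` complete to `X p ∪ X i` with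
no other neighbors. Then the subgraph induced by the union of the parts `X i` (`i ≠ p`),
after removing all neighbors of `yp`, is chordal (has no induced cycle of length ≥ 4). -/
private lemma six_cycle_aux {V : Type*} (G : SimpleGraph V) (v0 v1 v2 v3 v4 v5 : V)
    (A1 : G.Adj v0 v1) (A2 : G.Adj v1 v2) (A3 : G.Adj v2 v3) (A4 : G.Adj v3 v4)
    (A5 : G.Adj v4 v5) (A6 : G.Adj v5 v0)
    (N1 : ¬ G.Adj v0 v2) (N2 : ¬ G.Adj v0 v3) (N3 : ¬ G.Adj v0 v4)
    (N4 : ¬ G.Adj v1 v3) (N5 : ¬ G.Adj v1 v4) (N6 : ¬ G.Adj v1 v5)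
    (N7 : ¬ G.Adj v2 v4) (N8 : ¬ G.Adj v2 v5) (N9 : ¬ G.Adj v3 v5)
    (D01 : v0 ≠ v1) (D02 : v0 ≠ v2) (D03 : v0 ≠ v3) (D04 : v0 ≠ v4) (D05 : v0 ≠ v5)
    (D12 : v1 ≠ v2) (D13 : v1 ≠ v3) (D14 : v1 ≠ v4) (D15 : v1 ≠ v5)
    (D23 : v2 ≠ v3) (D24 : v2 ≠ v4) (D25 : v2 ≠ v5)
    (D34 : v3 ≠ v4) (D35 : v3 ≠ v5) (D45 : v4 ≠ v5) :
    HasInducedCycle G 6 := by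
  have e5 : ![v0,v1,v2,v3,v4,v5] (5 : Fin 6) = v5 := rfl
  have hinj : Function.Injective ![v0,v1,v2,v3,v4,v5] := by
    intro x y hxy
    fin_cases x <;> fin_cases y <;>
      simp_all [Matrix.cons_val_zero, Matrix.cons_val_one, Matrix.head_cons,
        Matrix.cons_val_succ, Matrix.cons_val_fin_one, e5]
  refine ⟨⟨![v0,v1,v2,v3,v4,v5], hinj⟩, ?_⟩
  have sA1 := A1.symm; have sA2 := A2.symm; have sA3 := A3.symm; have sA4 := A4.symm
  have sA5 := A5.symm; have sA6 := A6.symm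
  have sN1 := fun h => N1 (G.adj_symm h); have sN2 := fun h => N2 (G.adj_symm h)
  have sN3 := fun h => N3 (G.adj_symm h); have sN4 := fun h => N4 (G.adj_symm h)
  have sN5 := fun h => N5 (G.adj_symm h); have sN6 := fun h => N6 (G.adj_symm h)
  have sN7 := fun h => N7 (G.adj_symm h); have sN8 := fun h => N8 (G.adj_symm h)
  have sN9 := fun h => N9 (G.adj_symm h)
  intro i j
  simp only [Function.Embedding.coeFn_mk]
  fin_cases i <;> fin_cases j <;>
    simp_all (config := { decide := true }) [Matrix.cons_val_zero, Matrix.cons_val_one,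
      Matrix.head_cons, Matrix.cons_val_succ, Matrix.cons_val_fin_one, e5, SimpleGraph.irrefl]

open Fin.CommRing Fin.NatCast in
theorem induced_nonneighbors_chordal (G : SimpleGraph V) (m : ℕ)
    (X : Fin m → Set V)
    (hclique : ∀ i, G.IsClique (X i))
    (hdisj : ∀ i j, i ≠ j → Disjoint (X i) (X j))
    (p : Fin m) (yp : V) (hyp : yp ∈ X p)
    (w : Fin m → V)
    (hwnot : ∀ i, i ≠ p → ∀ j, w i ∉ X j)
    (hwadj : ∀ i, i ≠ p → ∀ u, u ≠ w i → (G.Adj (w i) u ↔ u ∈ X p ∨ u ∈ X i))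
    (hEHF : EvenHoleFree G) :
    ∀ n, 4 ≤ n → ¬ ∃ f : Fin n ↪ V,
      (∀ i, (∃ j, j ≠ p ∧ f i ∈ X j) ∧ ¬ G.Adj yp (f i)) ∧
      (∀ i j, G.Adj (f i) (f j) ↔ (SimpleGraph.cycleGraph n).Adj i j) := by
  intro n hn
  rintro ⟨f, hf1, hf2⟩
  rcases Nat.even_or_odd n with hev | hodd
  · exact hEHF n hn hev ⟨f, hf2⟩
  obtain ⟨k, rfl⟩ : ∃ k, n = k + 2 := ⟨n - 2, by omega⟩
  have hk : 3 ≤ k := by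
    rcases hodd with ⟨t, ht⟩; omega
  -- choose part of each cycle vertex
  choose g hgp hgX using fun i => (hf1 i).1
  have hyadj : ∀ i, ¬ G.Adj yp (f i) := fun i => (hf1 i).2
  have hpart : ∀ i j, f i ∈ X j → j = g i := by
    intro i j hj
    by_contra hne
    exact Set.disjoint_left.mp (hdisj j (g i) hne) hj (hgX i)
  -- Fin (k+2) numeral facts
  have h10 : (1 : Fin (k+2)) ≠ 0 := by
    intro hh
    have := congrArg Fin.val hh
    simpa using this
  have h20 : (2 : Fin (k+2)) ≠ 0 := by
    intro hh
    have := congrArg Fin.val hh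
    rw [show (2 : Fin (k+2)) = ((2:ℕ) : Fin (k+2)) by norm_cast,
      Fin.val_natCast, Nat.mod_eq_of_lt (by omega), Fin.val_zero] at this
    omega
  have h21 : (2 : Fin (k+2)) ≠ 1 := by
    intro hh
    have := congrArg Fin.val hh
    rw [show (2 : Fin (k+2)) = ((2:ℕ) : Fin (k+2)) by norm_cast,
      show (1 : Fin (k+2)) = ((1:ℕ) : Fin (k+2)) by norm_cast,
      Fin.val_natCast, Fin.val_natCast,
      Nat.mod_eq_of_lt (by omega), Nat.mod_eq_of_lt (by omega)] at this
    omega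
  have h30 : (3 : Fin (k+2)) ≠ 0 := by
    intro hh
    have := congrArg Fin.val hh
    rw [show (3 : Fin (k+2)) = ((3:ℕ) : Fin (k+2)) by norm_cast,
      Fin.val_natCast, Nat.mod_eq_of_lt (by omega), Fin.val_zero] at this
    omega
  have hm21 : (-2 : Fin (k+2)) ≠ 1 := by
    intro hh
    apply h30
    have : (-2 : Fin (k+2)) + 2 = 1 + 2 := by rw [hh]
    rw [neg_add_cancel] at this
    rw [show (3 : Fin (k+2)) = 1 + 2 by ring, ← this]
  -- cycle adjacency facts
  have hcyc : ∀ i j : Fin (k+2), G.Adj (f i) (f j) ↔ (i - j = 1 ∨ j - i = 1) :=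
    fun i j => (hf2 i j).trans cycleGraph_adj
  have hA : ∀ i, G.Adj (f i) (f (i+1)) := fun i =>
    (hcyc i (i+1)).mpr (Or.inr (add_sub_cancel_left i 1))
  have hN2 : ∀ i, ¬ G.Adj (f i) (f (i+2)) := by
    intro i h
    rcases (hcyc i (i+2)).mp h with h' | h'
    · exact hm21 ((by ring : i - (i+2) = (-2 : Fin (k+2))) ▸ h')
    · exact h21 ((by ring : i + 2 - i = (2 : Fin (k+2))) ▸ h')
  have hne1 : ∀ i : Fin (k+2), i ≠ i + 1 := fun i h => h10 (left_eq_add.mp h)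
  have hne2 : ∀ i : Fin (k+2), i ≠ i + 2 := fun i h => h20 (left_eq_add.mp h)
  have hC : ∀ i, g i ≠ g (i + 2) := by
    intro i h
    exact hN2 i (hclique (g i) (hgX i) (h ▸ hgX (i+2)) (f.injective.ne (hne2 i)))
  -- find three consecutive vertices in distinct parts
  have key : ∃ i : Fin (k+2), g i ≠ g (i+1) ∧ g (i+1) ≠ g (i+1+1) := by
    by_contra hcon
    push_neg at hcon
    have step : ∀ i : Fin (k+2), (g i = g (i+1)) ↔ ¬ (g (i+1) = g (i+1+1)) := by
      intro i
      constructor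
      · intro h1 h2
        exact hC i (h1.trans (h2.trans (by rw [show i+1+1 = i+2 by ring])))
      · intro h2
        by_contra h1
        exact h2 (hcon i h1)
    have main : ∀ t : ℕ, ((g ((t:ℕ) : Fin (k+2)) = g (((t:ℕ) : Fin (k+2)) + 1)) ↔
        ((g 0 = g 1) ↔ Even t)) := by
      intro t
      induction t with
      | zero => simp
      | succ t ih =>
        have hcast : ((t+1 : ℕ) : Fin (k+2)) = ((t:ℕ) : Fin (k+2)) + 1 := by push_cast; ring
        rw [hcast, Nat.even_add_one]
        have s := step ((t:ℕ) : Fin (k+2))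
        tauto
    have := main (k+2)
    rw [Fin.natCast_self, zero_add] at this
    have hne : ¬ Even (k+2) := Nat.not_even_iff_odd.mpr hodd
    tauto
  obtain ⟨i0, hab, hbc⟩ := key
  have hi2 : i0 + 1 + 1 = i0 + 2 := by ring
  set a := g i0 with ha
  set c := g (i0+1+1) with hc
  have hac : a ≠ c := by rw [ha, hc, hi2]; exact hC i0
  have hapne : a ≠ p := hgp i0
  have hcpne : c ≠ p := hgp (i0+1+1)
  -- vertex distinctness and membership facts
  have hnotp : ∀ i, f i ∉ X p := fun i h => hgp i (hpart i p h).symm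
  have hypnef : ∀ i, yp ≠ f i := fun i h => hnotp i (h ▸ hyp)
  have hwa_ne : ∀ x j, x ∈ X j → x ≠ w a := fun x j hx h => hwnot a hapne j (h ▸ hx)
  have hwc_ne : ∀ x j, x ∈ X j → x ≠ w c := fun x j hx h => hwnot c hcpne j (h ▸ hx)
  have hyp_wa : yp ≠ w a := hwa_ne yp p hyp
  have hyp_wc : yp ≠ w c := hwc_ne yp p hyp
  -- adjacency of w's
  have hAwa := hwadj a hapne
  have hAwc := hwadj c hcpne
  have A1 : G.Adj yp (w a) := ((hAwa yp hyp_wa).mpr (Or.inl hyp)).symm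
  have A2 : G.Adj (w a) (f i0) := (hAwa (f i0) (hwa_ne _ _ (hgX i0))).mpr (Or.inr (hgX i0))
  have A3 : G.Adj (f i0) (f (i0+1)) := hA i0
  have A4 : G.Adj (f (i0+1)) (f (i0+1+1)) := hA (i0+1)
  have A5 : G.Adj (f (i0+1+1)) (w c) :=
    ((hAwc (f (i0+1+1)) (hwc_ne _ _ (hgX (i0+1+1)))).mpr (Or.inr (hgX (i0+1+1)))).symm
  have A6 : G.Adj (w c) yp := (hAwc yp hyp_wc).mpr (Or.inl hyp)
  -- non-adjacencies
  have hfnotin : ∀ i j, j ≠ g i → f i ∉ X j := fun i j hj h => hj (hpart i j h)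
  have N1 : ¬ G.Adj yp (f i0) := hyadj i0
  have N2 : ¬ G.Adj yp (f (i0+1)) := hyadj (i0+1)
  have N3 : ¬ G.Adj yp (f (i0+1+1)) := hyadj (i0+1+1)
  have N4 : ¬ G.Adj (w a) (f (i0+1)) := by
    intro h
    rcases (hAwa (f (i0+1)) (hwa_ne _ _ (hgX (i0+1)))).mp h with h' | h'
    · exact hnotp _ h'
    · exact hfnotin (i0+1) a hab h'
  have N5 : ¬ G.Adj (w a) (f (i0+1+1)) := by
    intro h
    rcases (hAwa (f (i0+1+1)) (hwa_ne _ _ (hgX (i0+1+1)))).mp h with h' | h'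
    · exact hnotp _ h'
    · exact hfnotin (i0+1+1) a hac h'
  have hwawc : w a ≠ w c := by
    intro h
    exact N5 (h ▸ A5.symm)
  have N6 : ¬ G.Adj (w a) (w c) := by
    intro h
    rcases (hAwa (w c) (Ne.symm hwawc)).mp h with h' | h'
    · exact hwnot c hcpne p h'
    · exact hwnot c hcpne a h'
  have N7 : ¬ G.Adj (f i0) (f (i0+1+1)) := by rw [hi2]; exact hN2 i0
  have N8 : ¬ G.Adj (f i0) (w c) := by
    intro h
    rcases (hAwc (f i0) (hwc_ne _ _ (hgX i0))).mp h.symm with h' | h'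
    · exact hnotp _ h'
    · exact hfnotin i0 c (Ne.symm hac) h'
  have N9 : ¬ G.Adj (f (i0+1)) (w c) := by
    intro h
    rcases (hAwc (f (i0+1)) (hwc_ne _ _ (hgX (i0+1)))).mp h.symm with h' | h'
    · exact hnotp _ h'
    · exact hfnotin (i0+1) c (Ne.symm hbc) h'
  -- distinctness for injectivity
  have D01 : yp ≠ w a := hyp_wa
  have D02 : yp ≠ f i0 := hypnef i0
  have D03 : yp ≠ f (i0+1) := hypnef (i0+1)
  have D04 : yp ≠ f (i0+1+1) := hypnef (i0+1+1)
  have D05 : yp ≠ w c := hyp_wc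
  have D12 : w a ≠ f i0 := (hwa_ne _ _ (hgX i0)).symm
  have D13 : w a ≠ f (i0+1) := (hwa_ne _ _ (hgX (i0+1))).symm
  have D14 : w a ≠ f (i0+1+1) := (hwa_ne _ _ (hgX (i0+1+1))).symm
  have D15 : w a ≠ w c := hwawc
  have D23 : f i0 ≠ f (i0+1) := f.injective.ne (hne1 i0)
  have D24 : f i0 ≠ f (i0+1+1) := f.injective.ne (hi2 ▸ hne2 i0)
  have D25 : f i0 ≠ w c := hwc_ne _ _ (hgX i0)
  have D34 : f (i0+1) ≠ f (i0+1+1) := f.injective.ne (hne1 (i0+1))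
  have D35 : f (i0+1) ≠ w c := hwc_ne _ _ (hgX (i0+1))
  have D45 : f (i0+1+1) ≠ w c := hwc_ne _ _ (hgX (i0+1+1))
  apply hEHF 6 (by norm_num) (by decide)
  exact six_cycle_aux G yp (w a) (f i0) (f (i0+1)) (f (i0+1+1)) (w c)
    A1 A2 A3 A4 A5 A6 N1 N2 N3 N4 N5 N6 N7 N8 N9
    D01 D02 D03 D04 D05 D12 D13 D14 D15 D23 D24 D25 D34 D35 D45
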